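/- Dual Jacobi–Trudi identity: for any partition λ with λ₁ = m and any integer M ≥ m, s_λ = det(e_{λ'_i - i + j})_{1 ≤ i,j ≤ M}, where λ' is the conjugate partition and e_k is the k-th elementary symmetric function, with e_0 = 1 and e_k = 0 for k < 0. -/

import Mathlib

open MvPolynomial

/-- The `k`-th complete homogeneous symmetric function, as a free generator of the
ring of symmetric functions `Λ = ℤ[h₁, h₂, …]` (with `h₀ = 1` and `h_k = 0` for `k < 0`). -/
noncomputable def hh (k : ℤ) : MvPolynomial ℕ ℤ :=
  if k < 0 then 0 else if k = 0 then 1 else MvPolynomial.X k.toNat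

/-- The Schur function of the sequence `(f 0, f 1, …, f (n-1))`, defined by the
Jacobi–Trudi determinant `det (h_{λ_i - i + j})_{1 ≤ i,j ≤ n}`. -/
noncomputable def schurN (n : ℕ) (f : ℕ → ℕ) : MvPolynomial ℕ ℤ :=
  Matrix.det (Matrix.of fun i j : Fin n => hh ((f i : ℤ) - (i : ℕ) + (j : ℕ)))

/-- Schur function of a partition given as a list of its parts. -/
noncomputable def schurL (l : List ℕ) : MvPolynomial ℕ ℤ :=
  schurN l.length (fun i => l.getD i 0)

/-- The `k`-th elementary symmetric function, realized as the Schur function of the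
column partition `(1^k)` (with `e₀ = 1` and `e_k = 0` for `k < 0`). -/
noncomputable def ee (k : ℤ) : MvPolynomial ℕ ℤ :=
  if k < 0 then 0 else schurN k.toNat (fun _ => 1)

/-- The conjugate partition: `λ'_p = #{j : λ_j ≥ p}` (1-based, `lam` of height `n`). -/
def conjPart (n : ℕ) (lam : ℕ → ℕ) (p : ℕ) : ℕ :=
  ((List.range n).filter (fun j => p ≤ lam (j + 1))).length

abbrev RR := MvPolynomial ℕ ℤ

lemma hh_neg {k : ℤ} (h : k < 0) : hh k = 0 := if_pos h

lemma hh_zero : hh 0 = 1 := rfl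

lemma ee_neg {k : ℤ} (h : k < 0) : ee k = 0 := if_pos h

lemma ee_zero : ee 0 = 1 := by
  simp [ee, schurN, Matrix.det_fin_zero]

-- determinant of the unipotent upper triangular Toeplitz matrix
lemma det_hh_tri (k : ℕ) :
    Matrix.det (Matrix.of fun a b : Fin k => hh ((b : ℕ) - (a : ℕ) : ℤ)) = 1 := by
  rw [Matrix.det_of_upperTriangular]
  · apply Finset.prod_eq_one
    intro a _
    simp [hh_zero]
  · intro a b hba
    simp only [Matrix.of_apply]
    apply hh_neg
    simp only [id] at hba
    omega

lemma coe_succAbove {m : ℕ} (j : Fin (m+1)) (c : Fin m) :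
    ((j.succAbove c : Fin (m+1)) : ℕ) = if (c:ℕ) < (j:ℕ) then (c:ℕ) else (c:ℕ)+1 := by
  rcases lt_or_ge (c:ℕ) (j:ℕ) with h | h
  · rw [Fin.succAbove_of_castSucc_lt, if_pos h]
    · rfl
    · simpa [Fin.lt_def] using h
  · rw [Fin.succAbove_of_le_castSucc, if_neg (not_lt.2 h)]
    · rfl
    · simpa [Fin.le_def] using h

lemma ee_nat (m : ℕ) :
    ee (m : ℤ) = Matrix.det (Matrix.of fun i j : Fin m => hh (1 - (i:ℕ) + (j:ℕ))) := by
  rw [ee, if_neg (by omega), Int.toNat_natCast, schurN]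
  norm_num

lemma minor_det {m : ℕ} (j : Fin (m+1)) :
    Matrix.det ((Matrix.of fun a b : Fin (m+1) => hh (1 - (a:ℕ) + (b:ℕ))).submatrix
        Fin.succ j.succAbove) = ee ((m : ℤ) - (j : ℕ)) := by
  set k := (j : ℕ) with hkdef
  have hk : k ≤ m := by omega
  have hsum : k + (m - k) = m := by omega
  set σ : Fin k ⊕ Fin (m-k) ≃ Fin m := finSumFinEquiv.trans (finCongr hsum) with hσdef
  have hσl : ∀ a : Fin k, ((σ (Sum.inl a) : Fin m) : ℕ) = (a : ℕ) := by
    intro a; simp [hσdef]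
  have hσr : ∀ b : Fin (m-k), ((σ (Sum.inr b) : Fin m) : ℕ) = k + (b : ℕ) := by
    intro b; simp [hσdef]
  rw [← Matrix.det_submatrix_equiv_self σ]
  have hblk : (((Matrix.of fun a b : Fin (m+1) => hh (1 - (a:ℕ) + (b:ℕ))).submatrix
      Fin.succ j.succAbove).submatrix σ σ) = Matrix.fromBlocks
      (Matrix.of fun a b : Fin k => hh ((b:ℕ) - (a:ℕ) : ℤ))
      (Matrix.of fun (a : Fin k) (b : Fin (m-k)) => hh ((k:ℤ) + (b:ℕ) + 1 - (a:ℕ)))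
      0
      (Matrix.of fun a b : Fin (m-k) => hh (1 - (a:ℕ) + (b:ℕ))) := by
    apply Matrix.ext
    rintro (a | a) (b | b) <;>
      simp only [Matrix.submatrix_apply, Matrix.of_apply, Matrix.fromBlocks_apply₁₁,
        Matrix.fromBlocks_apply₁₂, Matrix.fromBlocks_apply₂₁, Matrix.fromBlocks_apply₂₂,
        Fin.val_succ, coe_succAbove, hσl, hσr]
    · rw [if_pos (by exact b.2)]
      congr 1
      push_cast
      ring
    · rw [if_neg (by omega)]
      congr 1
      push_cast
      ring
    · rw [if_pos (by exact b.2)]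
      simp only [Matrix.zero_apply]
      apply hh_neg
      have := b.2
      push_cast
      omega
    · rw [if_neg (by omega)]
      congr 1
      push_cast
      ring
  rw [hblk, Matrix.det_fromBlocks_zero₂₁, det_hh_tri, one_mul]
  have : (m : ℤ) - (j:ℕ) = ((m - k : ℕ) : ℤ) := by omega
  rw [this, ee_nat]

lemma core (m : ℕ) :
    ∑ t ∈ Finset.range (m+2), ((-1:RR)^t * hh (t:ℤ) * ee (((m+1 : ℕ) : ℤ) - t)) = 0 := by
  have hexp : ee (((m+1 : ℕ)) : ℤ) =
      ∑ jf : Fin (m+1), (-1:RR)^(jf:ℕ) * hh (((jf:ℕ):ℤ)+1) * ee ((m:ℤ) - (jf:ℕ)) := by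
    rw [ee_nat (m+1), Matrix.det_succ_row_zero]
    refine Finset.sum_congr rfl fun jf _ => ?_
    rw [minor_det, Matrix.of_apply,
      show (1:ℤ) - (((0 : Fin (m+1)):ℕ):ℤ) + ((jf:ℕ):ℤ) = ((jf:ℕ):ℤ)+1 by simp; ring]
  rw [Finset.sum_range_succ']
  have h0 : ((-1:RR)^0 * hh ((0:ℕ):ℤ) * ee (((m+1:ℕ):ℤ) - ((0:ℕ):ℤ))) = ee ((m+1 : ℕ) : ℤ) := by
    simp [hh_zero]
  rw [h0, hexp,
    Fin.sum_univ_eq_sum_range (fun t => (-1:RR)^t * hh (((t:ℕ):ℤ)+1) * ee ((m:ℤ) - (t:ℕ))) (m+1)]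
  rw [← Finset.sum_add_distrib]
  apply Finset.sum_eq_zero
  intro t ht
  have harg : (((m+1:ℕ)):ℤ) - ((t+1:ℕ):ℤ) = (m:ℤ) - t := by push_cast; ring
  rw [harg]
  have hsgn : ((-1:RR)^(t+1)) = -(-1:RR)^t := by rw [pow_succ]; ring
  rw [hsgn]
  have hcast : (((t+1:ℕ)) : ℤ) = ((t:ℤ)+1) := by push_cast; ring
  rw [hcast]
  ring

noncomputable def e2 (k : ℤ) : RR := (-1)^(k.toNat) * ee k

lemma e2_neg {k : ℤ} (h : k < 0) : e2 k = 0 := by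
  rw [e2, ee_neg h, mul_zero]

lemma e2_zero : e2 0 = 1 := by simp [e2, ee_zero]

noncomputable def Hmat (N : ℕ) : Matrix (Fin N) (Fin N) RR :=
  Matrix.of fun i j => hh (((j:ℕ) : ℤ) - ((i:ℕ) : ℤ))

noncomputable def Emat (N : ℕ) : Matrix (Fin N) (Fin N) RR :=
  Matrix.of fun i j => e2 (((j:ℕ) : ℤ) - ((i:ℕ) : ℤ))

lemma HE (N : ℕ) : Hmat N * Emat N = 1 := by
  apply Matrix.ext
  intro i j
  rw [Matrix.mul_apply]
  simp only [Hmat, Emat, Matrix.of_apply]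
  rcases lt_trichotomy (j:ℕ) (i:ℕ) with hlt | heq | hgt
  · rw [Matrix.one_apply_ne (by rintro rfl; omega)]
    apply Finset.sum_eq_zero
    intro k _
    rcases lt_or_ge (k:ℕ) (i:ℕ) with h | h
    · rw [hh_neg (by omega), zero_mul]
    · rw [e2_neg (by omega), mul_zero]
  · have hij : i = j := Fin.ext (by omega)
    subst hij
    rw [Matrix.one_apply_eq]
    rw [Finset.sum_eq_single i]
    · simp [hh_zero, e2_zero]
    · intro k _ hk
      rcases lt_or_ge (k:ℕ) (i:ℕ) with h | h
      · rw [hh_neg (by omega), zero_mul]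
      · have : (i:ℕ) < (k:ℕ) := by
          rcases Nat.eq_or_lt_of_le h with h' | h'
          · exact absurd (Fin.ext h'.symm) hk
          · omega
        rw [e2_neg (by omega), mul_zero]
    · intro h
      exact absurd (Finset.mem_univ i) h
  · rw [Matrix.one_apply_ne (by rintro rfl; omega)]
    obtain ⟨d, hd⟩ : ∃ d, (j:ℕ) - (i:ℕ) = d + 1 := ⟨(j:ℕ) - (i:ℕ) - 1, by omega⟩
    set m := d + 1 with hm
    rw [← Finset.sum_subset (Finset.subset_univ (Finset.Icc i j))]
    swap
    · intro k _ hk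
      rw [Finset.mem_Icc, not_and_or] at hk
      rcases hk with h | h
      · rw [Fin.le_def, not_le] at h
        rw [hh_neg (by omega), zero_mul]
      · rw [Fin.le_def, not_le] at h
        rw [e2_neg (by omega), mul_zero]
    · rw [show (0:RR) = (-1)^m * (0:RR) by ring, ← core d]
      rw [Finset.mul_sum]
      refine Finset.sum_nbij' (fun k => (k:ℕ) - (i:ℕ))
        (fun t => (⟨(i:ℕ) + min t m, by omega⟩ : Fin N)) ?_ ?_ ?_ ?_ ?_
      · intro k hk
        rw [Finset.mem_Icc] at hk
        have h1 := hk.1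
        have h2 := hk.2
        rw [Fin.le_def] at h1 h2
        rw [Finset.mem_range]
        show (k:ℕ) - (i:ℕ) < d + 2
        omega
      · intro t ht
        rw [Finset.mem_range] at ht
        rw [Finset.mem_Icc]
        constructor
        · rw [Fin.le_def]
          show (i:ℕ) ≤ (i:ℕ) + min t m
          omega
        · rw [Fin.le_def]
          show (i:ℕ) + min t m ≤ (j:ℕ)
          omega
      · intro k hk
        rw [Finset.mem_Icc] at hk
        have h1 := hk.1
        have h2 := hk.2
        rw [Fin.le_def] at h1 h2
        apply Fin.ext
        show (i:ℕ) + min ((k:ℕ) - (i:ℕ)) m = (k:ℕ)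
        omega
      · intro t ht
        rw [Finset.mem_range] at ht
        show (i:ℕ) + min t m - (i:ℕ) = t
        omega
      · intro k hk
        rw [Finset.mem_Icc] at hk
        have h1 := hk.1
        have h2 := hk.2
        rw [Fin.le_def] at h1 h2
        set t := (k:ℕ) - (i:ℕ) with htdef
        have htm : t ≤ m := by omega
        have harg1 : ((k:ℕ):ℤ) - ((i:ℕ):ℤ) = (t:ℤ) := by omega
        have harg2 : ((j:ℕ):ℤ) - ((k:ℕ):ℤ) = ((m:ℕ):ℤ) - (t:ℤ) := by push_cast; omega
        rw [harg1, harg2]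
        have he2 : e2 ((m:ℤ) - (t:ℤ)) = (-1)^(m-t) * ee ((m:ℤ) - t) := by
          rw [e2]
          congr 2
          omega
        rw [he2]
        have hsgn : ((-1:RR)^(m-t)) = (-1)^m * (-1)^t := by
          calc ((-1:RR)^(m-t)) = (-1)^(m-t) * ((-1:RR)^2)^t := by norm_num
            _ = (-1)^((m-t) + 2*t) := by rw [← pow_mul, ← pow_add]
            _ = (-1)^(m + t) := by congr 1; omega
            _ = (-1)^m * (-1)^t := by rw [pow_add]
        rw [hsgn]
        have hc2 : (((d+1:ℕ)):ℤ) - (t:ℤ) = (m:ℤ) - t := by rw [hm]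
        rw [hc2]
        ring

lemma jacobi {N a b : ℕ} (A B : Matrix (Fin N) (Fin N) RR) (hAB : A * B = 1)
    (e f : (Fin a ⊕ Fin b) ≃ Fin N) :
    ((Equiv.Perm.sign (e.trans f.symm) : ℤ) : RR) * A.det *
      (B.submatrix (⇑e ∘ Sum.inl) (⇑f ∘ Sum.inl)).det
      = (A.submatrix (⇑f ∘ Sum.inr) (⇑e ∘ Sum.inr)).det := by
  classical
  set A11 := A.submatrix (⇑f ∘ Sum.inl) (⇑e ∘ Sum.inl)
  set A12 := A.submatrix (⇑f ∘ Sum.inl) (⇑e ∘ Sum.inr)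
  set A21 := A.submatrix (⇑f ∘ Sum.inr) (⇑e ∘ Sum.inl)
  set A22 := A.submatrix (⇑f ∘ Sum.inr) (⇑e ∘ Sum.inr)
  set B11 := B.submatrix (⇑e ∘ Sum.inl) (⇑f ∘ Sum.inl)
  set B12 := B.submatrix (⇑e ∘ Sum.inl) (⇑f ∘ Sum.inr)
  set B21 := B.submatrix (⇑e ∘ Sum.inr) (⇑f ∘ Sum.inl)
  set B22 := B.submatrix (⇑e ∘ Sum.inr) (⇑f ∘ Sum.inr)
  have hA' : A.submatrix ⇑f ⇑e = Matrix.fromBlocks A11 A12 A21 A22 := by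
    apply Matrix.ext; rintro (i|i) (j|j) <;> rfl
  have hB' : B.submatrix ⇑e ⇑f = Matrix.fromBlocks B11 B12 B21 B22 := by
    apply Matrix.ext; rintro (i|i) (j|j) <;> rfl
  have hAB' : (A.submatrix ⇑f ⇑e) * (B.submatrix ⇑e ⇑f) = 1 := by
    rw [Matrix.submatrix_mul_equiv, hAB, Matrix.submatrix_one_equiv]
  rw [hA', hB'] at hAB'
  rw [Matrix.fromBlocks_multiply, ← Matrix.fromBlocks_one] at hAB'
  have hone : Matrix.toBlocks₁₁ (Matrix.fromBlocks (1 : Matrix (Fin a) (Fin a) RR) 0 0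
      (1 : Matrix (Fin b) (Fin b) RR)) = 1 := by
    apply Matrix.ext; intro i j; rfl
  have hzero : Matrix.toBlocks₂₁ (Matrix.fromBlocks (1 : Matrix (Fin a) (Fin a) RR) 0 0
      (1 : Matrix (Fin b) (Fin b) RR)) = 0 := by
    apply Matrix.ext; intro i j; rfl
  rw [Matrix.fromBlocks_one] at hAB'
  have e11 : A11 * B11 + A12 * B21 = 1 := by
    have h := congrArg Matrix.toBlocks₁₁ hAB'
    rw [Matrix.toBlocks_fromBlocks₁₁, ← Matrix.fromBlocks_one, hone] at h
    exact h
  have e21 : A21 * B11 + A22 * B21 = 0 := by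
    have h := congrArg Matrix.toBlocks₂₁ hAB'
    rw [Matrix.toBlocks_fromBlocks₂₁, ← Matrix.fromBlocks_one, hzero] at h
    exact h
  have key : (A.submatrix ⇑f ⇑e) * Matrix.fromBlocks B11 0 B21 1 =
      Matrix.fromBlocks 1 A12 0 A22 := by
    rw [hA', Matrix.fromBlocks_multiply]
    rw [Matrix.mul_zero, Matrix.mul_zero, Matrix.mul_one, Matrix.mul_one, e11, e21]
    simp
  have hdet := congrArg Matrix.det key
  rw [Matrix.det_mul, Matrix.det_fromBlocks_zero₁₂, Matrix.det_fromBlocks_zero₂₁,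
    Matrix.det_one, Matrix.det_one, mul_one, one_mul] at hdet
  have hdA' : (A.submatrix ⇑f ⇑e).det =
      ((Equiv.Perm.sign (e.trans f.symm) : ℤ) : RR) * A.det := by
    have hsub : A.submatrix ⇑f ⇑e = (A.submatrix ⇑f ⇑f).submatrix id ⇑(e.trans f.symm) := by
      apply Matrix.ext; intro i j
      simp [Matrix.submatrix_apply]
    rw [hsub, Matrix.det_permute', Matrix.det_submatrix_equiv_self]
  rw [hdA'] at hdet
  exact hdet

lemma conjPart_eq_card (n : ℕ) (lam : ℕ → ℕ) (p : ℕ) :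
    conjPart n lam p = ((Finset.range n).filter (fun j => p ≤ lam (j+1))).card := rfl

lemma conjPart_le (n : ℕ) (lam : ℕ → ℕ) (p : ℕ) : conjPart n lam p ≤ n := by
  rw [conjPart_eq_card]
  calc ((Finset.range n).filter _).card ≤ (Finset.range n).card := Finset.card_filter_le _ _
    _ = n := Finset.card_range n

lemma conjPart_anti (n : ℕ) (lam : ℕ → ℕ) {p q : ℕ} (h : p ≤ q) :
    conjPart n lam q ≤ conjPart n lam p := by
  rw [conjPart_eq_card, conjPart_eq_card]
  apply Finset.card_le_card
  intro t ht
  rw [Finset.mem_filter] at ht ⊢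
  exact ⟨ht.1, le_trans h ht.2⟩

lemma conjPart_ge_iff (n : ℕ) (lam : ℕ → ℕ)
    (hanti : ∀ i j, 1 ≤ i → i ≤ j → j ≤ n → lam j ≤ lam i) {i j : ℕ} (hj : j < n) :
    j + 1 ≤ conjPart n lam (i+1) ↔ i + 1 ≤ lam (j+1) := by
  rw [conjPart_eq_card]
  constructor
  · intro h
    by_contra hc
    rw [not_le] at hc
    have hsub : (Finset.range n).filter (fun t => i+1 ≤ lam (t+1)) ⊆ Finset.range j := by
      intro t ht
      rw [Finset.mem_filter, Finset.mem_range] at ht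
      rw [Finset.mem_range]
      by_contra htj
      rw [not_lt] at htj
      have := hanti (j+1) (t+1) (by omega) (by omega) (by omega)
      omega
    have := Finset.card_le_card hsub
    rw [Finset.card_range] at this
    omega
  · intro h
    have hsub : Finset.range (j+1) ⊆ (Finset.range n).filter (fun t => i+1 ≤ lam (t+1)) := by
      intro t ht
      rw [Finset.mem_range] at ht
      rw [Finset.mem_filter, Finset.mem_range]
      refine ⟨by omega, ?_⟩
      have := hanti (t+1) (j+1) (by omega) (by omega) (by omega)
      omega
    have := Finset.card_le_card hsub
    rw [Finset.card_range] at this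
    omega

lemma conjPart_of_zero (n : ℕ) (lam : ℕ → ℕ) (p : ℕ) (hp : 1 ≤ p)
    (hz : ∀ j < n, lam (j+1) = 0) : conjPart n lam p = 0 := by
  rw [conjPart_eq_card, Finset.card_eq_zero, Finset.filter_eq_empty_iff]
  intro t ht
  rw [Finset.mem_range] at ht
  rw [hz t ht]
  omega

lemma sum_conjPart (n M : ℕ) (lam : ℕ → ℕ) (h : ∀ j < n, lam (j+1) ≤ M) :
    ∑ i ∈ Finset.range M, conjPart n lam (i+1) = ∑ j ∈ Finset.range n, lam (j+1) := by
  have : ∀ i, conjPart n lam (i+1) =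
      ∑ j ∈ Finset.range n, (if i + 1 ≤ lam (j+1) then 1 else 0) := by
    intro i
    rw [conjPart_eq_card, Finset.card_filter]
  simp only [this]
  rw [Finset.sum_comm]
  apply Finset.sum_congr rfl
  intro j hj
  rw [Finset.mem_range] at hj
  have : (Finset.range M).filter (fun i => i + 1 ≤ lam (j+1)) = Finset.range (lam (j+1)) := by
    apply Finset.ext
    intro t
    rw [Finset.mem_filter, Finset.mem_range, Finset.mem_range]
    have := h j hj
    omega
  calc (∑ i ∈ Finset.range M, if i + 1 ≤ lam (j+1) then 1 else 0)
      = ((Finset.range M).filter (fun i => i + 1 ≤ lam (j+1))).card := (Finset.card_filter _ _).symm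
    _ = lam (j+1) := by rw [this, Finset.card_range]

def eFun (n M : ℕ) (lam : ℕ → ℕ) : (Fin M ⊕ Fin n) → Fin (M + n) :=
  Sum.elim
    (fun i => ⟨n + (i:ℕ) - conjPart n lam ((i:ℕ)+1), by have := i.isLt; omega⟩)
    (fun j => ⟨n - 1 - (j:ℕ) + min (lam ((j:ℕ)+1)) M, by have := j.isLt; omega⟩)

lemma eFun_inj (n M : ℕ) (lam : ℕ → ℕ)
    (hanti : ∀ i j, 1 ≤ i → i ≤ j → j ≤ n → lam j ≤ lam i) (hM : lam 1 ≤ M) :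
    Function.Injective (eFun n M lam) := by
  have hlamle : ∀ j < n, lam (j+1) ≤ M := fun j hj =>
    le_trans (hanti 1 (j+1) (by omega) (by omega) (by omega)) hM
  rintro (i | i) (j | j) h <;> have hval := congrArg Fin.val h <;>
    simp only [eFun, Sum.elim_inl, Sum.elim_inr] at hval
  · -- inl inl
    have h1 : conjPart n lam ((i:ℕ)+1) ≤ n := conjPart_le _ _ _
    have h2 : conjPart n lam ((j:ℕ)+1) ≤ n := conjPart_le _ _ _
    rcases le_or_gt (i:ℕ) (j:ℕ) with hle | hlt
    · have := conjPart_anti n lam (show (i:ℕ)+1 ≤ (j:ℕ)+1 by omega)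
      have : (i:ℕ) = (j:ℕ) := by omega
      exact congrArg Sum.inl (Fin.ext this)
    · have := conjPart_anti n lam (show (j:ℕ)+1 ≤ (i:ℕ)+1 by omega)
      have : (i:ℕ) = (j:ℕ) := by omega
      exact congrArg Sum.inl (Fin.ext this)
  · -- inl inr : impossible
    exfalso
    have hj := j.isLt
    have hmin : min (lam ((j:ℕ)+1)) M = lam ((j:ℕ)+1) := min_eq_left (hlamle _ hj)
    rw [hmin] at hval
    have hcle : conjPart n lam ((i:ℕ)+1) ≤ n := conjPart_le _ _ _
    rcases le_or_gt ((i:ℕ)+1) (lam ((j:ℕ)+1)) with hc | hc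
    · have := (conjPart_ge_iff n lam hanti hj).mpr hc
      omega
    · have hle : conjPart n lam ((i:ℕ)+1) ≤ (j:ℕ) := by
        by_contra hcc
        rw [not_le] at hcc
        have := (conjPart_ge_iff n lam hanti (i := (i:ℕ)) (j := (j:ℕ)) hj).mp (by omega)
        omega
      omega
  · -- inr inl : impossible
    exfalso
    have hi := i.isLt
    have hmin : min (lam ((i:ℕ)+1)) M = lam ((i:ℕ)+1) := min_eq_left (hlamle _ hi)
    rw [hmin] at hval
    have hcle : conjPart n lam ((j:ℕ)+1) ≤ n := conjPart_le _ _ _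
    rcases le_or_gt ((j:ℕ)+1) (lam ((i:ℕ)+1)) with hc | hc
    · have := (conjPart_ge_iff n lam hanti hi).mpr hc
      omega
    · have hle : conjPart n lam ((j:ℕ)+1) ≤ (i:ℕ) := by
        by_contra hcc
        rw [not_le] at hcc
        have := (conjPart_ge_iff n lam hanti (i := (j:ℕ)) (j := (i:ℕ)) hi).mp (by omega)
        omega
      omega
  · -- inr inr
    have hi := i.isLt
    have hj := j.isLt
    rw [min_eq_left (hlamle _ hi), min_eq_left (hlamle _ hj)] at hval
    rcases le_or_gt (i:ℕ) (j:ℕ) with hle | hlt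
    · have := hanti ((i:ℕ)+1) ((j:ℕ)+1) (by omega) (by omega) (by omega)
      have : (i:ℕ) = (j:ℕ) := by omega
      exact congrArg Sum.inr (Fin.ext this)
    · have := hanti ((j:ℕ)+1) ((i:ℕ)+1) (by omega) (by omega) (by omega)
      have : (i:ℕ) = (j:ℕ) := by omega
      exact congrArg Sum.inr (Fin.ext this)

lemma eFun_bij (n M : ℕ) (lam : ℕ → ℕ)
    (hanti : ∀ i j, 1 ≤ i → i ≤ j → j ≤ n → lam j ≤ lam i) (hM : lam 1 ≤ M) :
    Function.Bijective (eFun n M lam) := by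
  rw [Fintype.bijective_iff_injective_and_card]
  exact ⟨eFun_inj n M lam hanti hM, by simp⟩

noncomputable def eEquiv (n M : ℕ) (lam : ℕ → ℕ)
    (hanti : ∀ i j, 1 ≤ i → i ≤ j → j ≤ n → lam j ≤ lam i) (hM : lam 1 ≤ M) :
    (Fin M ⊕ Fin n) ≃ Fin (M + n) :=
  Equiv.ofBijective _ (eFun_bij n M lam hanti hM)

noncomputable def fEquiv (n M : ℕ) : (Fin M ⊕ Fin n) ≃ Fin (M + n) :=
  eEquiv n M (fun _ => 0) (fun _ _ _ _ _ => le_refl 0) (Nat.zero_le M)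

lemma sign_lemma (n M : ℕ) : ∀ (s : ℕ) (lam : ℕ → ℕ)
    (hanti : ∀ i j, 1 ≤ i → i ≤ j → j ≤ n → lam j ≤ lam i) (hM : lam 1 ≤ M),
    (∑ j ∈ Finset.range n, lam (j+1) = s) →
    Equiv.Perm.sign ((eEquiv n M lam hanti hM).trans (fEquiv n M).symm) = (-1)^s := by
  intro s
  induction s with
  | zero =>
    intro lam hanti hM hsum
    have hz : ∀ j < n, lam (j+1) = 0 := by
      intro j hj
      exact Finset.sum_eq_zero_iff.mp hsum j (Finset.mem_range.mpr hj)
    have heq : eEquiv n M lam hanti hM = fEquiv n M := by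
      apply Equiv.ext
      intro x
      show eFun n M lam x = eFun n M (fun _ => 0) x
      rcases x with i | j
      · apply Fin.ext
        show n + (i:ℕ) - conjPart n lam ((i:ℕ)+1) = n + (i:ℕ) - conjPart n (fun _ => 0) ((i:ℕ)+1)
        rw [conjPart_of_zero _ _ _ (by omega) hz,
          conjPart_of_zero _ _ _ (by omega) (fun _ _ => rfl)]
      · apply Fin.ext
        show n - 1 - (j:ℕ) + min (lam ((j:ℕ)+1)) M = n - 1 - (j:ℕ) + min 0 M
        rw [hz _ j.isLt]
    rw [heq, Equiv.self_trans_symm]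
    simp
  | succ s ih =>
    intro lam hanti hM hsum
    have hex : ∃ j ∈ Finset.range n, 0 < lam (j+1) := by
      by_contra hcon
      push_neg at hcon
      have : ∑ j ∈ Finset.range n, lam (j+1) = 0 :=
        Finset.sum_eq_zero (fun j hj => by have := hcon j hj; omega)
      omega
    have hFne : ((Finset.range n).filter (fun j => 0 < lam (j+1))).Nonempty := by
      obtain ⟨j, hj1, hj2⟩ := hex
      exact ⟨j, Finset.mem_filter.mpr ⟨hj1, hj2⟩⟩
    obtain ⟨j₀, hj₀props⟩ : ∃ j₀, (j₀ < n ∧ 0 < lam (j₀+1)) ∧ ∀ j, j₀ < j → j < n → lam (j+1) = 0 := by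
      refine ⟨((Finset.range n).filter (fun j => 0 < lam (j+1))).max' hFne, ⟨?_, ?_⟩, ?_⟩
      · exact Finset.mem_range.mp (Finset.mem_filter.mp (Finset.max'_mem _ hFne)).1
      · exact (Finset.mem_filter.mp (Finset.max'_mem _ hFne)).2
      · intro j hjgt hjn
        by_contra hne
        have hmem : j ∈ (Finset.range n).filter (fun j => 0 < lam (j+1)) :=
          Finset.mem_filter.mpr ⟨Finset.mem_range.mpr hjn, by omega⟩
        have := Finset.le_max' _ j hmem
        omega
    obtain ⟨⟨hj₀n, hl₀pos⟩, hzero⟩ := hj₀props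
    obtain ⟨l₀, hl₀def⟩ : ∃ x, x = lam (j₀+1) := ⟨_, rfl⟩
    have hl₀pos' : 0 < l₀ := by omega
    have hl₀M : l₀ ≤ M := by
      rw [hl₀def]
      exact le_trans (hanti 1 (j₀+1) (by omega) (by omega) (by omega)) hM
    obtain ⟨lam', hlam'⟩ : ∃ f : ℕ → ℕ, f = fun k => if k = j₀ + 1 then lam k - 1 else lam k :=
      ⟨_, rfl⟩
    have hlam'j₀ : lam' (j₀+1) = l₀ - 1 := by
      rw [hlam', hl₀def]
      simp
    have hlam'ne : ∀ k, k ≠ j₀ + 1 → lam' k = lam k := by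
      intro k hk
      rw [hlam']
      simp [hk]
    have hanti' : ∀ i j, 1 ≤ i → i ≤ j → j ≤ n → lam' j ≤ lam' i := by
      intro i j h1 h2 h3
      have hij := hanti i j h1 h2 h3
      rcases eq_or_ne i (j₀+1) with hi | hi <;> rcases eq_or_ne j (j₀+1) with hj | hj
      · rw [hi, hj]
      · have hjz : lam j = 0 := by
          have h4 : j₀ < j - 1 := by omega
          have := hzero (j-1) h4 (by omega)
          rwa [show j - 1 + 1 = j by omega] at this
        rw [hlam'ne j hj, hjz]
        omega
      · rw [hlam'ne i hi, hj, hlam'j₀]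
        rw [hj, ← hl₀def] at hij
        omega
      · rw [hlam'ne i hi, hlam'ne j hj]
        exact hij
    have hM' : lam' 1 ≤ M := by
      rcases eq_or_ne 1 (j₀+1) with h | h
      · rw [← h] at hlam'j₀
        rw [hlam'j₀]
        omega
      · rw [hlam'ne 1 h]
        exact hM
    have hsum' : ∑ j ∈ Finset.range n, lam' (j+1) = s := by
      have hmem : j₀ ∈ Finset.range n := Finset.mem_range.mpr hj₀n
      have h1 := (Finset.add_sum_erase _ (fun j => lam' (j+1)) hmem).symm
      have h2 := (Finset.add_sum_erase _ (fun j => lam (j+1)) hmem).symm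
      have h3 : ∑ j ∈ (Finset.range n).erase j₀, lam' (j+1)
          = ∑ j ∈ (Finset.range n).erase j₀, lam (j+1) := by
        apply Finset.sum_congr rfl
        intro j hj
        exact hlam'ne (j+1) (by have := (Finset.mem_erase.mp hj).1; omega)
      rw [h1, h3, hlam'j₀]
      rw [h2] at hsum
      omega
    have hc1 : conjPart n lam l₀ = j₀ + 1 := by
      rw [conjPart_eq_card]
      have hfeq : (Finset.range n).filter (fun t => l₀ ≤ lam (t+1)) = Finset.range (j₀+1) := by
        apply Finset.ext
        intro t
        rw [Finset.mem_filter, Finset.mem_range, Finset.mem_range]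
        constructor
        · rintro ⟨htn, hge⟩
          by_contra hc
          have := hzero t (by omega) htn
          omega
        · intro ht
          refine ⟨by omega, ?_⟩
          rw [hl₀def]
          exact hanti (t+1) (j₀+1) (by omega) (by omega) (by omega)
      rw [hfeq, Finset.card_range]
    have hc2 : conjPart n lam' l₀ = j₀ := by
      rw [conjPart_eq_card]
      have hfeq : (Finset.range n).filter (fun t => l₀ ≤ lam' (t+1)) = Finset.range j₀ := by
        apply Finset.ext
        intro t
        rw [Finset.mem_filter, Finset.mem_range, Finset.mem_range]
        constructor
        · rintro ⟨htn, hge⟩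
          rcases eq_or_ne t j₀ with h | h
          · rw [h, hlam'j₀] at hge
            omega
          · rcases lt_or_gt_of_ne h with h' | h'
            · exact h'
            · rw [hlam'ne (t+1) (by omega)] at hge
              have := hzero t h' htn
              omega
        · intro ht
          refine ⟨by omega, ?_⟩
          rw [hlam'ne (t+1) (by omega), hl₀def]
          exact hanti (t+1) (j₀+1) (by omega) (by omega) (by omega)
      rw [hfeq, Finset.card_range]
    have hc3 : ∀ p, p ≠ l₀ → conjPart n lam' p = conjPart n lam p := by
      intro p hp
      rw [conjPart_eq_card, conjPart_eq_card]
      congr 1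
      apply Finset.filter_congr
      intro t _
      rcases eq_or_ne t j₀ with h | h
      · rw [h, hlam'j₀, ← hl₀def]
        constructor <;> intro <;> omega
      · rw [hlam'ne (t+1) (by omega)]
    obtain ⟨v, hvdef⟩ : ∃ v, v = n - 1 - j₀ + l₀ := ⟨_, rfl⟩
    have hvN : v < M + n := by omega
    obtain ⟨vF, hvF⟩ : ∃ x : Fin (M+n), (x:ℕ) = v := ⟨⟨v, hvN⟩, rfl⟩
    obtain ⟨v1F, hv1F⟩ : ∃ x : Fin (M+n), (x:ℕ) = v - 1 := ⟨⟨v-1, by omega⟩, rfl⟩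
    have hne : vF ≠ v1F := by
      intro hcon
      have := congrArg Fin.val hcon
      omega
    obtain ⟨i₀, hi₀⟩ : ∃ x : Fin M, (x:ℕ) = l₀ - 1 := ⟨⟨l₀-1, by omega⟩, rfl⟩
    obtain ⟨j₀F, hj₀F2⟩ : ∃ x : Fin n, (x:ℕ) = j₀ := ⟨⟨j₀, hj₀n⟩, rfl⟩
    have hval_i₀ : eFun n M lam (Sum.inl i₀) = v1F := by
      apply Fin.ext
      show n + (i₀:ℕ) - conjPart n lam ((i₀:ℕ)+1) = (v1F:ℕ)
      rw [hi₀, hv1F, show (l₀-1)+1 = l₀ by omega, hc1]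
      omega
    have hval_j₀ : eFun n M lam (Sum.inr j₀F) = vF := by
      apply Fin.ext
      show n - 1 - (j₀F:ℕ) + min (lam ((j₀F:ℕ)+1)) M = (vF:ℕ)
      rw [hj₀F2, hvF, ← hl₀def, min_eq_left hl₀M]
      omega
    have hval_i₀' : eFun n M lam' (Sum.inl i₀) = vF := by
      apply Fin.ext
      show n + (i₀:ℕ) - conjPart n lam' ((i₀:ℕ)+1) = (vF:ℕ)
      rw [hi₀, hvF, show (l₀-1)+1 = l₀ by omega, hc2]
      omega
    have hval_j₀' : eFun n M lam' (Sum.inr j₀F) = v1F := by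
      apply Fin.ext
      show n - 1 - (j₀F:ℕ) + min (lam' ((j₀F:ℕ)+1)) M = (v1F:ℕ)
      rw [hj₀F2, hv1F, hlam'j₀, min_eq_left (by omega)]
      omega
    have hswap : ∀ x, eFun n M lam' x = Equiv.swap vF v1F (eFun n M lam x) := by
      intro x
      rcases x with i | j
      · rcases eq_or_ne i i₀ with h | h
        · rw [h, hval_i₀, Equiv.swap_apply_right, hval_i₀']
        · have hiv : (i:ℕ) + 1 ≠ l₀ := by
            intro hcon
            apply h
            apply Fin.ext
            omega
          have heq2 : eFun n M lam' (Sum.inl i) = eFun n M lam (Sum.inl i) := by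
            apply Fin.ext
            show n + (i:ℕ) - conjPart n lam' ((i:ℕ)+1) = n + (i:ℕ) - conjPart n lam ((i:ℕ)+1)
            rw [hc3 _ hiv]
          rw [heq2]
          refine (Equiv.swap_apply_of_ne_of_ne ?_ ?_).symm
          · intro hcon
            rw [← hval_j₀] at hcon
            exact Sum.inl_ne_inr (eFun_inj n M lam hanti hM hcon)
          · intro hcon
            rw [← hval_i₀] at hcon
            exact h (Sum.inl.inj (eFun_inj n M lam hanti hM hcon))
      · rcases eq_or_ne j j₀F with h | h
        · rw [h, hval_j₀, Equiv.swap_apply_left, hval_j₀']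
        · have hjv : (j:ℕ) + 1 ≠ j₀ + 1 := by
            intro hcon
            apply h
            apply Fin.ext
            omega
          have heq2 : eFun n M lam' (Sum.inr j) = eFun n M lam (Sum.inr j) := by
            apply Fin.ext
            show n - 1 - (j:ℕ) + min (lam' ((j:ℕ)+1)) M = n - 1 - (j:ℕ) + min (lam ((j:ℕ)+1)) M
            rw [hlam'ne _ hjv]
          rw [heq2]
          refine (Equiv.swap_apply_of_ne_of_ne ?_ ?_).symm
          · intro hcon
            rw [← hval_j₀] at hcon
            exact h (Sum.inr.inj (eFun_inj n M lam hanti hM hcon))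
          · intro hcon
            rw [← hval_i₀] at hcon
            exact (Sum.inl_ne_inr (eFun_inj n M lam hanti hM hcon.symm))
    have hgoal := ih lam' hanti' hM' hsum'
    have hcomp : (eEquiv n M lam' hanti' hM').trans (fEquiv n M).symm =
        ((eEquiv n M lam hanti hM).trans (fEquiv n M).symm).trans
          (((fEquiv n M).trans (Equiv.swap vF v1F)).trans (fEquiv n M).symm) := by
      apply Equiv.ext
      intro x
      simp only [Equiv.trans_apply]
      rw [Equiv.apply_symm_apply]
      exact congrArg (fEquiv n M).symm (hswap x)
    rw [hcomp] at hgoal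
    have hτswap : ((fEquiv n M).trans (Equiv.swap vF v1F)).trans (fEquiv n M).symm =
        Equiv.swap ((fEquiv n M).symm vF) ((fEquiv n M).symm v1F) :=
      Equiv.trans_swap_trans_symm vF v1F (fEquiv n M)
    rw [hτswap] at hgoal
    have hsignτ : Equiv.Perm.sign
        (Equiv.swap ((fEquiv n M).symm vF) ((fEquiv n M).symm v1F)) = -1 := by
      apply Equiv.Perm.sign_swap
      intro hcon
      exact hne ((fEquiv n M).symm.injective hcon)
    set g := (eEquiv n M lam hanti hM).trans (fEquiv n M).symm with hgdef
    set τ := Equiv.swap ((fEquiv n M).symm vF) ((fEquiv n M).symm v1F) with hτdef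
    have hmul : Equiv.Perm.sign (g.trans τ) = Equiv.Perm.sign τ * Equiv.Perm.sign g := by
      rw [show g.trans τ = τ * g from rfl, map_mul]
    rw [hmul, hsignτ] at hgoal
    have hfin : Equiv.Perm.sign g = - (-1:ℤˣ)^s := by
      rw [← hgoal]
      simp
    rw [hfin, pow_succ, mul_neg_one]

lemma neg_one_pow_congr' (a b : ℕ) (h : a % 2 = b % 2) : ((-1:RR))^a = (-1)^b := by
  rcases Nat.even_or_odd a with ha | ha
  · have hb : Even b := by
      rw [Nat.even_iff] at ha ⊢
      omega
    rw [ha.neg_one_pow, hb.neg_one_pow]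
  · have hb : Odd b := by
      rw [Nat.odd_iff] at ha ⊢
      omega
    rw [ha.neg_one_pow, hb.neg_one_pow]

/-- Dual Jacobi–Trudi identity: for a partition `λ` with `λ₁ = m` and any `M ≥ m`,
`s_λ = det (e_{λ'_i - i + j})_{1 ≤ i,j ≤ M}`. -/
theorem dual_jacobi_trudi (n M : ℕ) (lam : ℕ → ℕ)
    (hanti : ∀ i j, 1 ≤ i → i ≤ j → j ≤ n → lam j ≤ lam i)
    (hpos : ∀ i, 1 ≤ i → i ≤ n → 0 < lam i)
    (hM : lam 1 ≤ M) :
    schurN n (fun i => lam (i + 1)) =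
      Matrix.det (Matrix.of fun i j : Fin M =>
        ee ((conjPart n lam ((i : ℕ) + 1) : ℤ) - (i : ℕ) + (j : ℕ))) := by
  classical
  have hlamle : ∀ j < n, lam (j+1) ≤ M := fun j hj =>
    le_trans (hanti 1 (j+1) (by omega) (by omega) (by omega)) hM
  set e := eEquiv n M lam hanti hM with hedef
  set f := fEquiv n M with hfdef
  have hjac := jacobi (Hmat (M+n)) (Emat (M+n)) (HE (M+n)) e f
  have hfl : ∀ j : Fin M, ((f (Sum.inl j)) : ℕ) = n + (j:ℕ) := by
    intro j
    show n + (j:ℕ) - conjPart n (fun _ => 0) ((j:ℕ)+1) = n + (j:ℕ)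
    rw [conjPart_of_zero _ _ _ (by omega) (fun _ _ => rfl)]
    omega
  have hfr : ∀ j : Fin n, ((f (Sum.inr j)) : ℕ) = n - 1 - (j:ℕ) := by
    intro j
    show n - 1 - (j:ℕ) + min 0 M = n - 1 - (j:ℕ)
    simp
  have hel : ∀ i : Fin M, ((e (Sum.inl i)) : ℕ) = n + (i:ℕ) - conjPart n lam ((i:ℕ)+1) :=
    fun i => rfl
  have her : ∀ j : Fin n, ((e (Sum.inr j)) : ℕ) = n - 1 - (j:ℕ) + lam ((j:ℕ)+1) := by
    intro j
    show n - 1 - (j:ℕ) + min (lam ((j:ℕ)+1)) M = _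
    rw [min_eq_left (hlamle _ j.isLt)]
  -- the H-minor is the (transposed) Jacobi–Trudi matrix
  have hRHS : (Hmat (M+n)).submatrix (⇑f ∘ Sum.inr) (⇑e ∘ Sum.inr) =
      (Matrix.of fun i j : Fin n => hh ((lam ((i:ℕ)+1) : ℤ) - (i : ℕ) + (j : ℕ))).transpose := by
    apply Matrix.ext
    intro i j
    simp only [Matrix.submatrix_apply, Function.comp_apply, Hmat, Matrix.of_apply,
      Matrix.transpose_apply]
    congr 1
    have h1 := her j
    have h2 := hfr i
    have h3 := j.isLt
    have h4 := i.isLt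
    omega
  -- the E-minor equals the target matrix up to signs
  set B := Matrix.of (fun i j : Fin M =>
    ee ((conjPart n lam ((i : ℕ) + 1) : ℤ) - (i : ℕ) + (j : ℕ))) with hBdef
  set D := Matrix.of (fun i j : Fin M => (-1:RR)^(j:ℕ) * B i j) with hDdef
  have hLHS : (Emat (M+n)).submatrix (⇑e ∘ Sum.inl) (⇑f ∘ Sum.inl) =
      Matrix.of (fun i j : Fin M =>
        (-1:RR)^(conjPart n lam ((i:ℕ)+1) + (i:ℕ)) * D i j) := by
    apply Matrix.ext
    intro i j
    simp only [Matrix.submatrix_apply, Function.comp_apply, Emat, Matrix.of_apply,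
      hDdef, hBdef]
    have h1 := hel i
    have h2 := hfl j
    have h3 := i.isLt
    have hμ := conjPart_le n lam ((i:ℕ)+1)
    set μ := conjPart n lam ((i:ℕ)+1) with hμdef
    have hz : ((f (Sum.inl j) : ℕ) : ℤ) - ((e (Sum.inl i) : ℕ) : ℤ) = (μ:ℤ) - (i:ℕ) + (j:ℕ) := by
      omega
    rw [hz]
    set z := (μ:ℤ) - (i:ℕ) + (j:ℕ) with hzdef
    rcases lt_or_ge z 0 with hneg | hnn
    · rw [e2_neg hneg, ee_neg hneg]
      ring
    · rw [e2]
      have htn : z.toNat % 2 = (μ + (i:ℕ) + (j:ℕ)) % 2 := by omega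
      rw [neg_one_pow_congr' _ _ htn]
      rw [show μ + (i:ℕ) + (j:ℕ) = (μ + (i:ℕ)) + (j:ℕ) by ring, pow_add]
      ring
  -- compute determinants
  have hdetH : (Hmat (M+n)).det = 1 := det_hh_tri (M+n)
  have hdetLHS : ((Emat (M+n)).submatrix (⇑e ∘ Sum.inl) (⇑f ∘ Sum.inl)).det =
      (-1:RR)^(∑ j ∈ Finset.range n, lam (j+1)) * B.det := by
    rw [hLHS, Matrix.det_mul_column, hDdef, Matrix.det_mul_row]
    rw [Finset.prod_pow_eq_pow_sum, Finset.prod_pow_eq_pow_sum]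
    rw [← mul_assoc, ← pow_add]
    congr 1
    apply neg_one_pow_congr'
    have hsc : ∑ i ∈ Finset.range M, conjPart n lam (i+1) = ∑ j ∈ Finset.range n, lam (j+1) :=
      sum_conjPart n M lam hlamle
    have h1 : ∑ i : Fin M, (conjPart n lam ((i:ℕ)+1) + (i:ℕ)) =
        (∑ i ∈ Finset.range M, conjPart n lam (i+1)) + ∑ i ∈ Finset.range M, i := by
      rw [Finset.sum_add_distrib]
      congr 1
      · exact Fin.sum_univ_eq_sum_range (fun i => conjPart n lam (i+1)) M
      · exact Fin.sum_univ_eq_sum_range (fun i => i) M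
    have h2 : ∑ i : Fin M, (i:ℕ) = ∑ i ∈ Finset.range M, i :=
      Fin.sum_univ_eq_sum_range (fun i => i) M
    rw [h1, h2, hsc]
    omega
  -- the sign
  have hsgn := sign_lemma n M (∑ j ∈ Finset.range n, lam (j+1)) lam hanti hM rfl
  rw [← hedef, ← hfdef] at hsgn
  rw [hdetH, hdetLHS, hRHS, Matrix.det_transpose, hsgn] at hjac
  rw [schurN, ← hjac]
  push_cast
  have heven : Even ((∑ j ∈ Finset.range n, lam (j+1)) + (∑ j ∈ Finset.range n, lam (j+1))) :=
    ⟨_, rfl⟩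
  rw [mul_one, ← mul_assoc, ← pow_add, heven.neg_one_pow, one_mul]
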